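/- For every integer k > 1, the rational number (2k-1)!/(4^(k-1)·((k-1)!)²) is not an integer; equivalently, the 2-adic valuation of (2k-1)!/((k-1)!)² is strictly less than 2k-2. -/

import Mathlib

lemma val2_fact (n : ℕ) : padicValNat 2 n.factorial = n - (Nat.digits 2 n).sum := by
  have := sub_one_mul_padicValNat_factorial (p := 2) n
  simpa using this

lemma digits_odd (m : ℕ) (hm : 0 < m) :
    (Nat.digits 2 (2 * m + 1)).sum = (Nat.digits 2 m).sum + 1 := by
  rw [Nat.digits_def' (by norm_num : 1 < 2) (by omega)]
  simp [Nat.mul_add_mod, Nat.mul_add_div]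
  omega

theorem stmt_4 (k : ℕ) (hk : 1 < k) :
    (¬ ∃ z : ℤ,
      ((2 * k - 1).factorial : ℚ) / (4 ^ (k - 1) * ((k - 1).factorial : ℚ) ^ 2) = z) ∧
    padicValRat 2 (((2 * k - 1).factorial : ℚ) / ((k - 1).factorial : ℚ) ^ 2)
      < 2 * (k : ℤ) - 2 := by
  obtain ⟨m, rfl⟩ : ∃ m, k = m + 1 := ⟨k - 1, by omega⟩
  have hm : 0 < m := by omega
  have h2k : 2 * (m + 1) - 1 = 2 * m + 1 := by omega
  have hs : (Nat.digits 2 m).sum ≤ m := Nat.digit_sum_le 2 m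
  have hvN : (padicValNat 2 (2 * m + 1).factorial : ℤ) = 2 * m - (Nat.digits 2 m).sum := by
    have := val2_fact (2 * m + 1)
    rw [digits_odd m hm] at this
    omega
  have hvD : (padicValNat 2 m.factorial : ℤ) = m - (Nat.digits 2 m).sum := by
    have := val2_fact m
    omega
  have hNne : ((2 * m + 1).factorial : ℚ) ≠ 0 := by exact_mod_cast (2*m+1).factorial_ne_zero
  have hDne : (m.factorial : ℚ) ≠ 0 := by exact_mod_cast m.factorial_ne_zero
  have hD2ne : ((m.factorial : ℚ)) ^ 2 ≠ 0 := pow_ne_zero _ hDne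
  simp only [Nat.add_sub_cancel, h2k]
  constructor
  · rintro ⟨z, hz⟩
    have h4 : (4 : ℚ) ^ m * (m.factorial : ℚ) ^ 2 ≠ 0 := by positivity
    have hxne : ((2 * m + 1).factorial : ℚ) / (4 ^ m * (m.factorial : ℚ) ^ 2) ≠ 0 :=
      div_ne_zero hNne h4
    have hzne : (z : ℚ) ≠ 0 := hz ▸ hxne
    have hv : padicValRat 2 ((2 * m + 1).factorial / (4 ^ m * (m.factorial : ℚ) ^ 2))
        = (Nat.digits 2 m).sum - 2 * m := by
      rw [padicValRat.div hNne h4, padicValRat.mul (by positivity) hD2ne,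
        padicValRat.pow (m.factorial : ℚ), padicValRat.pow (4:ℚ)]
      have h4v : padicValRat 2 (4 : ℚ) = 2 := by
        have h44 : (4 : ℚ) = (((2 ^ 2 : ℕ)) : ℚ) := by norm_num
        rw [h44, padicValRat.of_nat, padicValNat.prime_pow]
        norm_num
      rw [h4v, padicValRat.of_nat, padicValRat.of_nat, hvN, hvD]
      ring
    rw [hz] at hv
    have : (0 : ℤ) ≤ padicValRat 2 (z : ℚ) := by
      rw [padicValRat.of_int]
      exact Int.natCast_nonneg _
    omega
  · have hv : padicValRat 2 (((2 * m + 1).factorial : ℚ) / (m.factorial : ℚ) ^ 2)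
        = (Nat.digits 2 m).sum := by
      rw [padicValRat.div hNne hD2ne, padicValRat.pow (m.factorial : ℚ),
        padicValRat.of_nat, padicValRat.of_nat, hvN, hvD]
      ring
    rw [hv]
    omega
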